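/- arXiv:1212.0369 — 4 statements merged into one kernel-verified Lean document; each statement's English description precedes it below -/
import Mathlib

section
/- Let x⁰ ∈ ℝ^m have support I with IC(x⁰) < 1, let s = Aᵗd(x⁰), and let x⋆ be any vector. Then the Bregman distance satisfies D_s(x⋆, x⁰) ≥ (1 − IC(x⁰)) · ‖x⋆_{I^c}‖₁, where x⋆_{I^c} is the restriction of x⋆ to the complement of I. -/
open Finset Matrix

/-- ℓ¹ norm of a finitely-indexed real vector. -/
noncomputable def l1 {ι : Type*} [Fintype ι] (x : ι → ℝ) : ℝ := ∑ i, |x i|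

/-- ℓ² (Euclidean) norm. -/
noncomputable def l2 {ι : Type*} [Fintype ι] (x : ι → ℝ) : ℝ := Real.sqrt (∑ i, (x i) ^ 2)

/-- ℓ^∞ norm. -/
noncomputable def linf {ι : Type*} [Fintype ι] (x : ι → ℝ) : ℝ := sSup {y | ∃ i, y = |x i|}

/-- Operator norm induced by the Euclidean norms (spectral norm). -/
noncomputable def opNorm2 {ι κ : Type*} [Fintype ι] [Fintype κ] (M : Matrix ι κ ℝ) : ℝ :=
  sSup {y | ∃ x : κ → ℝ, l2 x ≤ 1 ∧ y = l2 (M.mulVec x)}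

/-- Operator norm from ℓ¹ to ℓ². -/
noncomputable def norm12 {ι κ : Type*} [Fintype ι] [Fintype κ] (M : Matrix ι κ ℝ) : ℝ :=
  sSup {y | ∃ x : κ → ℝ, x ≠ 0 ∧ y = l2 (M.mulVec x) / l1 x}

/-- Submatrix of the columns of `A` indexed by `I`. -/
def colSub {n m : ℕ} (A : Matrix (Fin n) (Fin m) ℝ) (I : Finset (Fin m)) :
    Matrix (Fin n) {j // j ∈ I} ℝ := fun i j => A i j

/-- The Gram matrix `A_Iᵗ A_I`. -/
def gram {n m : ℕ} (A : Matrix (Fin n) (Fin m) ℝ) (I : Finset (Fin m)) :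
    Matrix {j // j ∈ I} {j // j ∈ I} ℝ := (colSub A I)ᵀ * colSub A I

/-- The sign vector of `x` restricted to `I`. -/
noncomputable def signI {m : ℕ} (x : Fin m → ℝ) (I : Finset (Fin m)) : {j // j ∈ I} → ℝ :=
  fun j => Real.sign (x j)

/-- The vector `d(x) = A_I (A_IᵗA_I)⁻¹ sign(x_I)`. -/
noncomputable def dvec {n m : ℕ} (A : Matrix (Fin n) (Fin m) ℝ) (I : Finset (Fin m))
    (x : Fin m → ℝ) : Fin n → ℝ :=
  (colSub A I).mulVec ((gram A I)⁻¹.mulVec (signI x I))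

/-- The identification coefficient `IC(x) = max_{j ∉ I} |a_jᵗ d(x)|`. -/
noncomputable def IC {n m : ℕ} (A : Matrix (Fin n) (Fin m) ℝ) (I : Finset (Fin m))
    (x : Fin m → ℝ) : ℝ :=
  sSup {y | ∃ j ∉ I, y = |∑ i, A i j * dvec A I x i|}

/-- Restriction of `x` to `I`, extended by zero. -/
def restr {m : ℕ} (I : Finset (Fin m)) (x : Fin m → ℝ) : Fin m → ℝ :=
  fun i => if i ∈ I then x i else 0

lemma realSign_mul_self (x : ℝ) : Real.sign x * x = |x| := by
  rcases lt_trichotomy x 0 with h | h | h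
  · rw [Real.sign_of_neg h, abs_of_neg h]; ring
  · simp [h]
  · rw [Real.sign_of_pos h, abs_of_pos h]; ring

lemma abs_sign_le_one (x : ℝ) : |Real.sign x| ≤ 1 := by
  rcases lt_trichotomy x 0 with h | h | h
  · rw [Real.sign_of_neg h]; norm_num
  · simp [h]
  · rw [Real.sign_of_pos h]; norm_num

/-- Bregman distance lower bound `D_s(x⋆, x⁰) ≥ (1 − IC(x⁰)) ‖x⋆_{I^c}‖₁`. -/
theorem bregman_lower_bound {n m : ℕ} (A : Matrix (Fin n) (Fin m) ℝ) (x0 xs : Fin m → ℝ)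
    (I : Finset (Fin m)) (hI : ∀ i, i ∈ I ↔ x0 i ≠ 0)
    (hinv : IsUnit (gram A I).det) (hIC : IC A I x0 < 1) :
    (1 - IC A I x0) * l1 (restr Iᶜ xs) ≤
      l1 xs - l1 x0 - ∑ j, (Aᵀ.mulVec (dvec A I x0)) j * (xs j - x0 j) := by
  set d := dvec A I x0 with hd
  set s := Aᵀ.mulVec d with hs
  -- on I, s equals the sign vector
  have hsI : ∀ j : Fin m, ∀ hj : j ∈ I, s j = Real.sign (x0 j) := by
    intro j hj
    have key : ((colSub A I)ᵀ).mulVec d = signI x0 I := by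
      rw [hd]
      unfold dvec
      rw [Matrix.mulVec_mulVec,
        show (colSub A I)ᵀ * colSub A I = gram A I from rfl,
        Matrix.mulVec_mulVec, Matrix.mul_nonsing_inv _ hinv, Matrix.one_mulVec]
    have h2 := congrFun key ⟨j, hj⟩
    simp only [Matrix.mulVec, dotProduct, Matrix.transpose_apply, colSub, signI] at h2
    simpa [hs, Matrix.mulVec, dotProduct, Matrix.transpose_apply] using h2
  -- off I, |s j| ≤ IC
  have hsIC : ∀ j : Fin m, j ∉ I → |s j| ≤ IC A I x0 := by
    intro j hj
    apply le_csSup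
    · apply Set.Finite.bddAbove
      apply Set.Finite.subset (Set.finite_range (fun j => |∑ i, A i j * d i|))
      rintro y ⟨j, hj, rfl⟩
      exact ⟨j, rfl⟩
    · exact ⟨j, hj, by simp [hs, hd, Matrix.mulVec, dotProduct, Matrix.transpose_apply]⟩
  have hIC0 : (0:ℝ) ≤ IC A I x0 := by
    by_cases hu : ∃ j, j ∉ I
    · obtain ⟨j, hj⟩ := hu
      exact (abs_nonneg _).trans (hsIC j hj)
    · have : {y | ∃ j ∉ I, y = |∑ i, A i j * d i|} = ∅ := by
        ext y; simp only [Set.mem_setOf_eq, Set.mem_empty_iff_false, iff_false]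
        rintro ⟨j, hj, -⟩
        exact hu ⟨j, hj⟩
      simp only [IC, ← hd, this, Real.sSup_empty, le_refl]
  have hRHS : l1 xs - l1 x0 - ∑ j, s j * (xs j - x0 j)
      = ∑ j, (|xs j| - |x0 j| - s j * (xs j - x0 j)) := by
    simp [l1, Finset.sum_sub_distrib]
  have hLHS : (1 - IC A I x0) * l1 (restr Iᶜ xs)
      = ∑ j, (1 - IC A I x0) * |restr Iᶜ xs j| := by
    simp [l1, Finset.mul_sum]
  rw [hRHS, hLHS]
  apply Finset.sum_le_sum
  intro j _
  by_cases hj : j ∈ I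
  · have hr : restr Iᶜ xs j = 0 := by simp [restr, hj]
    rw [hr, hsI j hj]
    have h1 : Real.sign (x0 j) * x0 j = |x0 j| := realSign_mul_self _
    have h2 : Real.sign (x0 j) * xs j ≤ |xs j| := by
      calc Real.sign (x0 j) * xs j ≤ |Real.sign (x0 j) * xs j| := le_abs_self _
        _ = |Real.sign (x0 j)| * |xs j| := abs_mul _ _
        _ ≤ 1 * |xs j| := mul_le_mul_of_nonneg_right (abs_sign_le_one _) (abs_nonneg _)
        _ = |xs j| := one_mul _
    have h3 : Real.sign (x0 j) * (xs j - x0 j) = Real.sign (x0 j) * xs j - |x0 j| := by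
      rw [mul_sub, h1]
    rw [abs_zero, mul_zero, h3]
    linarith [h2]
  · have hx0 : x0 j = 0 := by
      by_contra h; exact hj ((hI j).mpr h)
    have hr : restr Iᶜ xs j = xs j := by simp [restr, hj]
    rw [hr, hx0]
    have h1 : s j * xs j ≤ IC A I x0 * |xs j| := by
      calc s j * xs j ≤ |s j * xs j| := le_abs_self _
        _ = |s j| * |xs j| := abs_mul _ _
        _ ≤ IC A I x0 * |xs j| := mul_le_mul_of_nonneg_right (hsIC j hj) (abs_nonneg _)
    simp only [abs_zero, sub_zero]
    nlinarith [h1]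
end

section
/- Let y = Ax⁰ + b with ‖b‖₂ ≤ ε, let x⋆ satisfy ‖Ax⋆ − y‖₂ ≤ ε and ‖x⋆‖₁ ≤ ‖x⁰‖₁, and let s = Aᵗd(x⁰) with IC(x⁰) < 1. Then the Bregman distance satisfies D_s(x⋆, x⁰) ≤ 2‖d(x⁰)‖₂ · ε. -/
open Finset Matrix

lemma cs_abs {ι : Type*} [Fintype ι] (f g : ι → ℝ) :
    |∑ i, f i * g i| ≤ l2 f * l2 g := by
  rw [← Real.sqrt_sq_eq_abs, l2, l2, ← Real.sqrt_mul (by positivity)]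
  exact Real.sqrt_le_sqrt (Finset.sum_mul_sq_le_sq_mul_sq _ _ _)

/-- Bregman distance upper bound `D_s(x⋆, x⁰) ≤ 2 ‖d(x⁰)‖₂ ε`. -/
theorem bregman_upper_bound {n m : ℕ} (A : Matrix (Fin n) (Fin m) ℝ)
    (x0 xs : Fin m → ℝ) (b y : Fin n → ℝ) (ε : ℝ)
    (I : Finset (Fin m)) (hI : ∀ i, i ∈ I ↔ x0 i ≠ 0)
    (hinv : IsUnit (gram A I).det) (hIC : IC A I x0 < 1)
    (hy : y = A.mulVec x0 + b) (hb : l2 b ≤ ε)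
    (hxs : l2 (A.mulVec xs - y) ≤ ε) (hl1 : l1 xs ≤ l1 x0) :
    l1 xs - l1 x0 - ∑ j, (Aᵀ.mulVec (dvec A I x0)) j * (xs j - x0 j) ≤
      2 * l2 (dvec A I x0) * ε := by
  set d := dvec A I x0 with hd
  have hε : 0 ≤ ε := le_trans (Real.sqrt_nonneg _) hb
  have hdnn : 0 ≤ l2 d := Real.sqrt_nonneg _
  have key : ∑ j, (Aᵀ.mulVec d) j * (xs j - x0 j)
      = (∑ i, d i * (A.mulVec xs - y) i) + ∑ i, d i * b i := by
    simp only [Matrix.mulVec, dotProduct, Matrix.transpose_apply, Pi.sub_apply,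
      Pi.add_apply, hy, Finset.sum_mul, ← Finset.sum_add_distrib, Finset.mul_sum]
    rw [Finset.sum_comm]
    refine Finset.sum_congr rfl fun i _ => ?_
    rw [show (∑ x, A i x * d i * (xs x - x0 x))
        = d i * ∑ x, (A i x * xs x - A i x * x0 x) from by
      rw [Finset.mul_sum]; exact Finset.sum_congr rfl fun j _ => by ring,
      Finset.sum_sub_distrib]
    ring
  have h1 : |∑ i, d i * (A.mulVec xs - y) i| ≤ l2 d * ε :=
    le_trans (cs_abs d _) (mul_le_mul_of_nonneg_left hxs hdnn)
  have h2 : |∑ i, d i * b i| ≤ l2 d * ε :=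
    le_trans (cs_abs d b) (mul_le_mul_of_nonneg_left hb hdnn)
  have := abs_le.mp h1
  have := abs_le.mp h2
  rw [key]
  linarith
end

section
/- Under the hypotheses of the noisy ℓ¹ minimization problem, if IC(x⁰) < 1, then any solution x⋆ of min ‖x‖₁ subject to ‖Ax − y‖₂ ≤ ε satisfies ‖x⋆_{I^c}‖₁ ≤ 2ε‖d(x⁰)‖₂ / (1 − IC(x⁰)). -/
open Finset Matrix

lemma l2_cauchy {n : ℕ} (u v : Fin n → ℝ) : ∑ i, u i * v i ≤ l2 u * l2 v := by
  have h : ∀ x : Fin n → ℝ, l2 x = ‖(WithLp.equiv 2 (Fin n → ℝ)).symm x‖ := by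
    intro x
    rw [EuclideanSpace.norm_eq]
    simp [l2, Real.norm_eq_abs, sq_abs]
  rw [h, h]
  have := real_inner_le_norm ((WithLp.equiv 2 (Fin n → ℝ)).symm u)
    ((WithLp.equiv 2 (Fin n → ℝ)).symm v)
  simpa [PiLp.inner_apply, RCLike.inner_apply, mul_comm] using this

lemma l2_nonneg {n : ℕ} (u : Fin n → ℝ) : 0 ≤ l2 u := Real.sqrt_nonneg _

lemma mul_sign_eq_abs (x : ℝ) : x * Real.sign x = |x| := by
  rcases lt_trichotomy x 0 with h | h | h
  · rw [Real.sign_of_neg h, abs_of_neg h]; ring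
  · simp [h]
  · rw [Real.sign_of_pos h, abs_of_pos h]; ring

/-- any ℓ¹ minimizer satisfies `‖x⋆_{I^c}‖₁ ≤ 2ε‖d(x⁰)‖₂/(1 − IC(x⁰))`. -/
theorem off_support_l1_bound {n m : ℕ} (A : Matrix (Fin n) (Fin m) ℝ)
    (x0 xs : Fin m → ℝ) (b y : Fin n → ℝ) (ε : ℝ)
    (I : Finset (Fin m)) (hI : ∀ i, i ∈ I ↔ x0 i ≠ 0)
    (hcols : ∀ j, l2 (fun i => A i j) = 1)
    (hinv : IsUnit (gram A I).det) (hIC : IC A I x0 < 1)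
    (hy : y = A.mulVec x0 + b) (hb : l2 b ≤ ε)
    (hfeas : l2 (A.mulVec xs - y) ≤ ε)
    (hmin : ∀ x : Fin m → ℝ, l2 (A.mulVec x - y) ≤ ε → l1 xs ≤ l1 x) :
    l1 (restr Iᶜ xs) ≤ 2 * ε * l2 (dvec A I x0) / (1 - IC A I x0) := by
  set d : Fin n → ℝ := dvec A I x0 with hd
  set κ : ℝ := IC A I x0 with hκ
  set c : Fin m → ℝ := fun j => ∑ i, A i j * d i with hc
  set L : ℝ := ∑ j ∈ Iᶜ, |xs j| with hL
  -- the correlation vector equals the sign on I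
  have key : (colSub A I)ᵀ.mulVec d = signI x0 I := by
    rw [hd, dvec, Matrix.mulVec_mulVec, ← _root_.gram, Matrix.mulVec_mulVec,
      Matrix.mul_nonsing_inv _ hinv, Matrix.one_mulVec]
  have h1 : ∀ j ∈ I, c j = Real.sign (x0 j) := by
    intro j hj
    have := congrFun key ⟨j, hj⟩
    simpa [Matrix.mulVec, dotProduct, Matrix.transpose, colSub, signI, hc] using this
  -- IC bounds the correlations off I
  have h2 : ∀ j ∉ I, |c j| ≤ κ := by
    intro j hj
    have hbdd : BddAbove {y | ∃ j ∉ I, y = |∑ i, A i j * dvec A I x0 i|} := by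
      apply BddAbove.mono (t := Set.range (fun j => |∑ i, A i j * dvec A I x0 i|))
      · rintro y ⟨j, _, rfl⟩; exact ⟨j, rfl⟩
      · exact (Set.finite_range _).bddAbove
    exact le_csSup hbdd ⟨j, hj, rfl⟩
  -- swap of sums
  have hswap : ∀ x : Fin m → ℝ, ∑ i, d i * A.mulVec x i = ∑ j, x j * c j := by
    intro x
    simp only [Matrix.mulVec, dotProduct, Finset.mul_sum, hc]
    rw [Finset.sum_comm]
    apply Finset.sum_congr rfl
    intro j _
    exact Finset.sum_congr rfl fun i _ => by ring
  -- l1 of restriction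
  have hLr : l1 (restr Iᶜ xs) = L := by
    rw [hL, l1]
    rw [← Finset.sum_subset (Finset.subset_univ Iᶜ)
      (fun j _ hj => by simp [restr, hj])]
    exact Finset.sum_congr rfl fun j hj => by simp [restr, hj]
  -- x0 is feasible
  have hble : l2 (A.mulVec x0 - y) ≤ ε := by
    have e : l2 (A.mulVec x0 - y) = l2 b := by
      unfold l2; congr 1
      apply Finset.sum_congr rfl
      intro i _
      show (A.mulVec x0 i - y i) ^ 2 = (b i) ^ 2
      rw [hy]
      show (A.mulVec x0 i - (A.mulVec x0 i + b i)) ^ 2 = (b i) ^ 2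
      ring
    rw [e]; exact hb
  have hxs0 : l1 xs ≤ l1 x0 := hmin x0 hble
  -- l1 x0 = ∑ j, x0 j * c j
  have hx0 : l1 x0 = ∑ j, x0 j * c j := by
    rw [l1]
    apply Finset.sum_congr rfl
    intro j _
    by_cases hj : j ∈ I
    · rw [h1 j hj, mul_sign_eq_abs]
    · have : x0 j = 0 := by
        by_contra h; exact hj ((hI j).mpr h)
      simp [this]
  -- lower bound on l1 xs
  have hsplit : ∀ f : Fin m → ℝ, ∑ j ∈ I, f j + ∑ j ∈ Iᶜ, f j = ∑ j, f j :=
    fun f => Finset.sum_add_sum_compl I f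
  have hIbound : ∑ j ∈ I, xs j * c j ≤ ∑ j ∈ I, |xs j| := by
    apply Finset.sum_le_sum
    intro j hj
    calc xs j * c j ≤ |xs j * c j| := le_abs_self _
      _ = |xs j| * |c j| := abs_mul _ _
      _ ≤ |xs j| * 1 := by
          apply mul_le_mul_of_nonneg_left _ (abs_nonneg _)
          rw [h1 j hj]; exact abs_sign_le_one _
      _ = |xs j| := mul_one _
  have hIcbound : |∑ j ∈ Iᶜ, xs j * c j| ≤ κ * L := by
      calc |∑ j ∈ Iᶜ, xs j * c j| ≤ ∑ j ∈ Iᶜ, |xs j * c j| :=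
            Finset.abs_sum_le_sum_abs _ _
        _ ≤ ∑ j ∈ Iᶜ, κ * |xs j| := by
            apply Finset.sum_le_sum
            intro j hj
            rw [abs_mul, mul_comm]
            exact mul_le_mul_of_nonneg_right (h2 j (Finset.mem_compl.mp hj))
              (abs_nonneg _)
        _ = κ * L := by rw [hL, Finset.mul_sum]
  have hlow : ∑ j, xs j * c j - κ * L + L ≤ l1 xs := by
    have e1 : l1 xs = ∑ j ∈ I, |xs j| + L := by
      rw [l1, hL, hsplit]
    have e2 : ∑ j, xs j * c j = ∑ j ∈ I, xs j * c j + ∑ j ∈ Iᶜ, xs j * c j := by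
      rw [hsplit]
    linarith [le_abs_self (∑ j ∈ Iᶜ, xs j * c j)]
  -- upper bound via Cauchy–Schwarz
  have hfeasy : l2 (y - A.mulVec xs) ≤ ε := by
    have e : l2 (y - A.mulVec xs) = l2 (A.mulVec xs - y) := by
      unfold l2; congr 1
      apply Finset.sum_congr rfl
      intro i _
      show (y i - A.mulVec xs i) ^ 2 = (A.mulVec xs i - y i) ^ 2
      ring
    rw [e]; exact hfeas
  have hεnn : 0 ≤ ε := le_trans (l2_nonneg b) hb
  have hup : ∑ j, (x0 j - xs j) * c j ≤ 2 * ε * l2 d := by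
    have e : ∑ j, (x0 j - xs j) * c j
        = ∑ i, d i * (A.mulVec x0 - y) i + ∑ i, d i * (y - A.mulVec xs) i := by
      have := hswap (x0 - xs)
      rw [Matrix.mulVec_sub] at this
      simp only [Pi.sub_apply] at this ⊢
      rw [← Finset.sum_add_distrib]
      rw [show ∑ j, (x0 j - xs j) * c j = ∑ i, d i * (A.mulVec x0 i - A.mulVec xs i)
        from this.symm]
      apply Finset.sum_congr rfl
      intro i _; ring
    rw [e]
    have c1 : ∑ i, d i * (A.mulVec x0 - y) i ≤ l2 d * l2 (A.mulVec x0 - y) :=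
      l2_cauchy _ _
    have c2 : ∑ i, d i * (y - A.mulVec xs) i ≤ l2 d * l2 (y - A.mulVec xs) :=
      l2_cauchy _ _
    have hdn := l2_nonneg d
    nlinarith [mul_le_mul_of_nonneg_left hble hdn, mul_le_mul_of_nonneg_left hfeasy hdn]
  -- combine
  have hfinal : (1 - κ) * L ≤ 2 * ε * l2 d := by
    have : ∑ j, (x0 j - xs j) * c j = ∑ j, x0 j * c j - ∑ j, xs j * c j := by
      rw [← Finset.sum_sub_distrib]
      exact Finset.sum_congr rfl fun j _ => by ring
    rw [this] at hup
    linarith [hx0 ▸ hxs0, hlow]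
  rw [hLr]
  rw [le_div_iff₀ (by linarith : (0:ℝ) < 1 - κ)]
  linarith
end

section
/- Let x⁰ have support I, suppose IC(x⁰) < 1, and let x¹ be any vector with ‖Ax¹ − y‖₂ ≤ ε and ‖x¹‖₁ ≤ ‖x⁰‖₁, where y = Ax⁰ + b and ‖b‖₂ ≤ ε. Then ‖x¹ − x⁰‖₂ ≤ 2ε(√(‖(A_IᵗA_I)⁻¹‖₂) + (‖d(x⁰)‖₂/(1−IC(x⁰)))(√(‖(A_IᵗA_I)⁻¹‖₂)·‖A_{I^c}‖_{1→2} + 1)); i.e., the error bound holds for any feasible vector with smaller ℓ¹ norm, not only minimizers. -/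
open Finset Matrix

/-! ### Auxiliary lemmas -/

section L2
variable {ι : Type*} [Fintype ι]

lemma l2_eq_norm (x : ι → ℝ) :
    l2 x = ‖(WithLp.equiv 2 (ι → ℝ)).symm x‖ := by
  rw [EuclideanSpace.norm_eq]
  simp [l2, Real.norm_eq_abs, sq_abs]

lemma l2_nonneg_s12 (x : ι → ℝ) : 0 ≤ l2 x := Real.sqrt_nonneg _

lemma l2_add_le (x y : ι → ℝ) : l2 (x + y) ≤ l2 x + l2 y := by
  simp only [l2_eq_norm]
  rw [show (WithLp.equiv 2 (ι → ℝ)).symm (x+y) = (WithLp.equiv 2 (ι → ℝ)).symm x + (WithLp.equiv 2 (ι → ℝ)).symm y from rfl]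
  exact norm_add_le _ _

lemma l2_neg (x : ι → ℝ) : l2 (-x) = l2 x := by simp [l2]

lemma l2_sub_le (x y : ι → ℝ) : l2 (x - y) ≤ l2 x + l2 y := by
  rw [sub_eq_add_neg]
  exact le_trans (l2_add_le x (-y)) (by rw [l2_neg])

lemma l2_smul (c : ℝ) (x : ι → ℝ) : l2 (c • x) = |c| * l2 x := by
  simp only [l2_eq_norm]
  rw [show (WithLp.equiv 2 (ι → ℝ)).symm (c • x) = c • (WithLp.equiv 2 (ι → ℝ)).symm x from rfl]
  rw [norm_smul]; simp [Real.norm_eq_abs]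

lemma l2_eq_zero_iff (x : ι → ℝ) : l2 x = 0 ↔ x = 0 := by
  rw [l2_eq_norm, norm_eq_zero]
  constructor
  · intro h; have := congrArg (WithLp.equiv 2 (ι → ℝ)) h; simpa using this
  · rintro rfl; rfl

lemma abs_dot_le (x y : ι → ℝ) :
    |∑ i, x i * y i| ≤ l2 x * l2 y := by
  have h := abs_real_inner_le_norm ((WithLp.equiv 2 (ι → ℝ)).symm x) ((WithLp.equiv 2 (ι → ℝ)).symm y)
  rw [PiLp.inner_apply] at h
  simpa [l2_eq_norm, RCLike.inner_apply, mul_comm] using h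

lemma l1_nonneg (x : ι → ℝ) : 0 ≤ l1 x :=
  Finset.sum_nonneg fun _ _ => abs_nonneg _

lemma l2_le_l1 (x : ι → ℝ) : l2 x ≤ l1 x := by
  rw [l2, show l1 x = Real.sqrt ((l1 x)^2) from (Real.sqrt_sq (l1_nonneg x)).symm]
  apply Real.sqrt_le_sqrt
  calc ∑ i, (x i)^2 = ∑ i, |x i| * |x i| := by simp [sq_abs, sq]
    _ ≤ ∑ i, l1 x * |x i| := by
        apply Finset.sum_le_sum; intro i _
        exact mul_le_mul_of_nonneg_right (Finset.single_le_sum (fun j _ => abs_nonneg (x j)) (mem_univ i)) (abs_nonneg _)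
    _ = (l1 x)^2 := by rw [← Finset.mul_sum, l1]; ring

lemma dot_le_l2_mul (x y : ι → ℝ) : x ⬝ᵥ y ≤ l2 x * l2 y :=
  le_trans (le_abs_self _) (abs_dot_le x y)

lemma l2_sq (x : ι → ℝ) : (l2 x)^2 = x ⬝ᵥ x := by
  rw [l2, Real.sq_sqrt (Finset.sum_nonneg fun _ _ => sq_nonneg _)]
  simp [dotProduct, sq]

end L2

section OpNorms
variable {ι κ : Type*} [Fintype ι] [Fintype κ]

/-- crude Frobenius-type bound -/
lemma mulVec_l2_le (M : Matrix ι κ ℝ) (x : κ → ℝ) :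
    l2 (M.mulVec x) ≤ Real.sqrt (∑ i, ∑ j, (M i j)^2) * l2 x := by
  have key : ∀ i, (M.mulVec x i)^2 ≤ (∑ j, (M i j)^2) * (l2 x)^2 := by
    intro i
    have h2 : |M.mulVec x i| ≤ l2 (fun j => M i j) * l2 x := abs_dot_le (fun j => M i j) x
    calc (M.mulVec x i)^2 = |M.mulVec x i|^2 := (sq_abs _).symm
      _ ≤ (l2 (fun j => M i j) * l2 x)^2 := by
          apply pow_le_pow_left₀ (abs_nonneg _) h2
      _ = (l2 (fun j => M i j))^2 * (l2 x)^2 := by ring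
      _ = (∑ j, (M i j)^2) * (l2 x)^2 := by
          rw [l2, Real.sq_sqrt (Finset.sum_nonneg fun _ _ => sq_nonneg _)]
  calc l2 (M.mulVec x) = Real.sqrt (∑ i, (M.mulVec x i)^2) := rfl
    _ ≤ Real.sqrt ((∑ i, ∑ j, (M i j)^2) * (l2 x)^2) := by
        apply Real.sqrt_le_sqrt
        rw [Finset.sum_mul]
        exact Finset.sum_le_sum fun i _ => key i
    _ = Real.sqrt (∑ i, ∑ j, (M i j)^2) * l2 x := by
        rw [Real.sqrt_mul (by positivity : (0:ℝ) ≤ ∑ i, ∑ j, (M i j)^2), Real.sqrt_sq (l2_nonneg_s12 x)]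

lemma opNorm2_bddAbove (M : Matrix ι κ ℝ) :
    BddAbove {y | ∃ x : κ → ℝ, l2 x ≤ 1 ∧ y = l2 (M.mulVec x)} := by
  refine ⟨Real.sqrt (∑ i, ∑ j, (M i j)^2), ?_⟩
  rintro y ⟨x, hx, rfl⟩
  calc l2 (M.mulVec x) ≤ Real.sqrt (∑ i, ∑ j, (M i j)^2) * l2 x := mulVec_l2_le M x
    _ ≤ Real.sqrt (∑ i, ∑ j, (M i j)^2) * 1 :=
        mul_le_mul_of_nonneg_left hx (Real.sqrt_nonneg _)
    _ = _ := mul_one _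

lemma opNorm2_nonneg (M : Matrix ι κ ℝ) : 0 ≤ opNorm2 M := by
  have h0 : (0:ℝ) ∈ {y | ∃ x : κ → ℝ, l2 x ≤ 1 ∧ y = l2 (M.mulVec x)} :=
    ⟨0, by simp [l2], by simp [l2]⟩
  exact le_csSup (opNorm2_bddAbove M) h0

lemma le_opNorm2 (M : Matrix ι κ ℝ) (x : κ → ℝ) :
    l2 (M.mulVec x) ≤ opNorm2 M * l2 x := by
  rcases eq_or_ne x 0 with rfl | hx
  · simp [l2, Matrix.mulVec_zero]
  · have hlx : 0 < l2 x := lt_of_le_of_ne (l2_nonneg_s12 x) (fun h => hx ((l2_eq_zero_iff x).mp h.symm))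
    have hmem : l2 (M.mulVec ((l2 x)⁻¹ • x)) ∈ {y | ∃ z : κ → ℝ, l2 z ≤ 1 ∧ y = l2 (M.mulVec z)} := by
      refine ⟨(l2 x)⁻¹ • x, ?_, rfl⟩
      rw [l2_smul, abs_of_pos (inv_pos.mpr hlx), inv_mul_cancel₀ (ne_of_gt hlx)]
    have h1 := le_csSup (opNorm2_bddAbove M) hmem
    rw [Matrix.mulVec_smul, l2_smul, abs_of_pos (inv_pos.mpr hlx)] at h1
    calc l2 (M.mulVec x) = ((l2 x)⁻¹ * l2 (M.mulVec x)) * l2 x := by field_simp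
      _ ≤ opNorm2 M * l2 x := mul_le_mul_of_nonneg_right h1 (le_of_lt hlx)

lemma norm12_bddAbove (M : Matrix ι κ ℝ) :
    BddAbove {y | ∃ z : κ → ℝ, z ≠ 0 ∧ y = l2 (M.mulVec z) / l1 z} := by
  refine ⟨Real.sqrt (∑ i, ∑ j, (M i j)^2), ?_⟩
  rintro y ⟨z, hz, rfl⟩
  have hlz : 0 < l1 z := by
    rcases Function.ne_iff.mp hz with ⟨j, hj⟩
    calc (0:ℝ) < |z j| := abs_pos.mpr hj
      _ ≤ l1 z := Finset.single_le_sum (fun i _ => abs_nonneg (z i)) (mem_univ j)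
  rw [div_le_iff₀ hlz]
  calc l2 (M.mulVec z) ≤ Real.sqrt (∑ i, ∑ j, (M i j)^2) * l2 z := mulVec_l2_le M z
    _ ≤ Real.sqrt (∑ i, ∑ j, (M i j)^2) * l1 z :=
        mul_le_mul_of_nonneg_left (l2_le_l1 z) (Real.sqrt_nonneg _)

lemma le_norm12 (M : Matrix ι κ ℝ) (x : κ → ℝ) :
    l2 (M.mulVec x) ≤ norm12 M * l1 x := by
  rcases eq_or_ne x 0 with rfl | hx
  · simp [l2, l1, Matrix.mulVec_zero]
  · have hl1 : 0 < l1 x := by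
      rcases Function.ne_iff.mp hx with ⟨j, hj⟩
      calc (0:ℝ) < |x j| := abs_pos.mpr hj
        _ ≤ l1 x := Finset.single_le_sum (fun i _ => abs_nonneg (x i)) (mem_univ j)
    have hmem : l2 (M.mulVec x) / l1 x ∈ {y | ∃ z : κ → ℝ, z ≠ 0 ∧ y = l2 (M.mulVec z) / l1 z} :=
      ⟨x, hx, rfl⟩
    have h := le_csSup (norm12_bddAbove M) hmem
    rw [div_le_iff₀ hl1] at h
    exact h

lemma norm12_nonneg (M : Matrix ι κ ℝ) : 0 ≤ norm12 M := by
  rcases isEmpty_or_nonempty κ with hk | hk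
  · have hempty : {y | ∃ x : κ → ℝ, x ≠ 0 ∧ y = l2 (M.mulVec x) / l1 x} = (∅ : Set ℝ) := by
      ext y
      simp only [Set.mem_setOf_eq, Set.mem_empty_iff_false, iff_false, not_exists]
      rintro x ⟨hx, -⟩
      exact hx (funext fun j => (hk.elim j))
    rw [norm12, hempty, Real.sSup_empty]
  · have hx : (fun _ : κ => (1:ℝ)) ≠ 0 := by
      intro hcontra
      have := congrFun hcontra (Classical.arbitrary κ)
      simp at this
    have hmem : l2 (M.mulVec fun _ => 1) / l1 (fun _ => 1) ∈
        {y | ∃ z : κ → ℝ, z ≠ 0 ∧ y = l2 (M.mulVec z) / l1 z} := ⟨_, hx, rfl⟩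
    exact le_trans (div_nonneg (l2_nonneg_s12 _) (l1_nonneg _)) (le_csSup (norm12_bddAbove M) hmem)

lemma l2_mulVec_le_sqrt (M : Matrix ι κ ℝ) (w : κ → ℝ) :
    l2 (M.mulVec w) ≤ Real.sqrt (opNorm2 (M * Mᵀ)) * l2 w := by
  set z := M.mulVec w with hz
  have hdot : (Mᵀ.mulVec z) ⬝ᵥ (Mᵀ.mulVec z) = z ⬝ᵥ (M * Mᵀ).mulVec z := by
    rw [← Matrix.mulVec_mulVec, Matrix.dotProduct_mulVec z M, Matrix.mulVec_transpose]
  have h1 : (l2 (Mᵀ.mulVec z))^2 ≤ opNorm2 (M * Mᵀ) * (l2 z)^2 := by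
    rw [l2_sq, hdot]
    calc z ⬝ᵥ (M * Mᵀ).mulVec z ≤ l2 z * l2 ((M * Mᵀ).mulVec z) := dot_le_l2_mul _ _
      _ ≤ l2 z * (opNorm2 (M * Mᵀ) * l2 z) :=
          mul_le_mul_of_nonneg_left (le_opNorm2 _ _) (l2_nonneg_s12 _)
      _ = opNorm2 (M * Mᵀ) * (l2 z)^2 := by ring
  have h1' : l2 (Mᵀ.mulVec z) ≤ Real.sqrt (opNorm2 (M * Mᵀ)) * l2 z := by
    have := Real.sqrt_le_sqrt h1
    rwa [Real.sqrt_sq (l2_nonneg_s12 _), Real.sqrt_mul (opNorm2_nonneg _), Real.sqrt_sq (l2_nonneg_s12 _)] at this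
  have h2 : (l2 z)^2 ≤ l2 (Mᵀ.mulVec z) * l2 w := by
    rw [l2_sq]
    calc z ⬝ᵥ z = z ⬝ᵥ M.mulVec w := by rw [← hz]
      _ = (Mᵀ.mulVec z) ⬝ᵥ w := by rw [Matrix.dotProduct_mulVec, Matrix.mulVec_transpose]
      _ ≤ l2 (Mᵀ.mulVec z) * l2 w := dot_le_l2_mul _ _
  rcases eq_or_lt_of_le (l2_nonneg_s12 z) with hz0 | hz0
  · rw [← hz0]; exact mul_nonneg (Real.sqrt_nonneg _) (l2_nonneg_s12 _)
  · have hkey : (l2 z)^2 ≤ (Real.sqrt (opNorm2 (M * Mᵀ)) * l2 z) * l2 w :=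
      le_trans h2 (mul_le_mul_of_nonneg_right h1' (l2_nonneg_s12 _))
    nlinarith [hz0]

end OpNorms

section MatLems
variable {n m : ℕ} (A : Matrix (Fin n) (Fin m) ℝ) (I : Finset (Fin m))

lemma gram_transpose : (gram A I)ᵀ = gram A I := by
  rw [_root_.gram, Matrix.transpose_mul, Matrix.transpose_transpose]

lemma AtD (x0 : Fin m → ℝ) (hinv : IsUnit (gram A I).det) :
    (colSub A I)ᵀ.mulVec (dvec A I x0) = signI x0 I := by
  rw [dvec, Matrix.mulVec_mulVec, Matrix.mulVec_mulVec, ← _root_.gram,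
    Matrix.mul_nonsing_inv _ hinv, Matrix.one_mulVec]

lemma recov (u : {j // j ∈ I} → ℝ) (hinv : IsUnit (gram A I).det) :
    ((gram A I)⁻¹ * (colSub A I)ᵀ).mulVec ((colSub A I).mulVec u) = u := by
  rw [Matrix.mulVec_mulVec, Matrix.mul_assoc, ← _root_.gram, Matrix.nonsing_inv_mul _ hinv,
    Matrix.one_mulVec]

lemma MMt (hinv : IsUnit (gram A I).det) :
    ((gram A I)⁻¹ * (colSub A I)ᵀ) * ((gram A I)⁻¹ * (colSub A I)ᵀ)ᵀ = (gram A I)⁻¹ := by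
  rw [Matrix.transpose_mul, Matrix.transpose_transpose, Matrix.transpose_nonsing_inv,
    gram_transpose]
  calc (gram A I)⁻¹ * (colSub A I)ᵀ * (colSub A I * (gram A I)⁻¹)
      = (gram A I)⁻¹ * ((colSub A I)ᵀ * colSub A I) * (gram A I)⁻¹ := by
        rw [Matrix.mul_assoc, Matrix.mul_assoc, Matrix.mul_assoc]
    _ = (gram A I)⁻¹ * gram A I * (gram A I)⁻¹ := by rw [← _root_.gram]
    _ = (gram A I)⁻¹ := by rw [Matrix.nonsing_inv_mul _ hinv, Matrix.one_mul]

lemma mulVec_split (h : Fin m → ℝ) :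
    A.mulVec h = (colSub A I).mulVec (fun j => h j) +
      (colSub A Iᶜ).mulVec (fun j => h j) := by
  funext i
  have hsum := Finset.sum_add_sum_compl I (fun j => A i j * h j)
  simp only [Matrix.mulVec, dotProduct, Pi.add_apply, colSub]
  rw [← hsum, Finset.sum_coe_sort I (fun j => A i j * h j),
    Finset.sum_coe_sort Iᶜ (fun j => A i j * h j)]

lemma IC_bound (x0 : Fin m → ℝ) (j : Fin m) (hj : j ∉ I) :
    |∑ i, A i j * dvec A I x0 i| ≤ IC A I x0 := by
  have hfin : ({y | ∃ j ∉ I, y = |∑ i, A i j * dvec A I x0 i|} : Set ℝ).Finite := by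
    have hsub : {y | ∃ j ∉ I, y = |∑ i, A i j * dvec A I x0 i|} ⊆
        (fun j => |∑ i, A i j * dvec A I x0 i|) '' Set.univ := by
      rintro y ⟨j, hj, rfl⟩; exact ⟨j, Set.mem_univ _, rfl⟩
    exact Set.Finite.subset (Set.Finite.image _ Set.finite_univ) hsub
  exact le_csSup hfin.bddAbove ⟨j, hj, rfl⟩

end MatLems

lemma sign_mul_le_abs (t s : ℝ) : Real.sign t * s ≤ |s| := by
  rcases lt_trichotomy t 0 with h | h | h
  · rw [Real.sign_of_neg h]; simpa using neg_le_abs s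
  · rw [h, Real.sign_zero, zero_mul]; exact abs_nonneg s
  · rw [Real.sign_of_pos h, one_mul]; exact le_abs_self s

lemma sign_mul_self_eq_abs {t : ℝ} (ht : t ≠ 0) : Real.sign t * t = |t| := by
  rcases ht.lt_or_gt with h | h
  · rw [Real.sign_of_neg h, abs_of_neg h]; ring
  · rw [Real.sign_of_pos h, abs_of_pos h]; ring

/-- the ℓ² error bound holds for any feasible vector with smaller ℓ¹ norm. -/
theorem l2_error_bound_feasible {n m : ℕ} (A : Matrix (Fin n) (Fin m) ℝ)
    (x0 x1 : Fin m → ℝ) (b y : Fin n → ℝ) (ε : ℝ)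
    (I : Finset (Fin m)) (hI : ∀ i, i ∈ I ↔ x0 i ≠ 0)
    (hinv : IsUnit (gram A I).det) (hIC : IC A I x0 < 1)
    (hy : y = A.mulVec x0 + b) (hb : l2 b ≤ ε)
    (hfeas : l2 (A.mulVec x1 - y) ≤ ε) (hl1 : l1 x1 ≤ l1 x0) :
    l2 (x1 - x0) ≤
      2 * ε * (Real.sqrt (opNorm2 ((gram A I)⁻¹)) +
        l2 (dvec A I x0) / (1 - IC A I x0) *
          (Real.sqrt (opNorm2 ((gram A I)⁻¹)) * norm12 (colSub A Iᶜ) + 1)) := by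
  classical
  set d := dvec A I x0 with hd
  set ic := IC A I x0 with hic
  set S := Real.sqrt (opNorm2 ((gram A I)⁻¹)) with hS
  set N := norm12 (colSub A Iᶜ) with hN
  have hC : 0 < 1 - ic := by linarith
  have hε0 : 0 ≤ ε := le_trans (l2_nonneg_s12 b) hb
  set h : Fin m → ℝ := x1 - x0 with hh
  set u : {j // j ∈ I} → ℝ := fun j => h j with hu
  set v : {j // j ∈ Iᶜ} → ℝ := fun j => h j with hv
  have hSnn : 0 ≤ S := Real.sqrt_nonneg _
  have hNnn : 0 ≤ N := norm12_nonneg _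
  -- bound on l2 (A h)
  have hAheq : A.mulVec h = (A.mulVec x1 - y) + b := by
    rw [hy, hh, Matrix.mulVec_sub]; abel
  have hAh : l2 (A.mulVec h) ≤ 2 * ε := by
    rw [hAheq]
    have := l2_add_le (A.mulVec x1 - y) b
    linarith
  -- splitting
  have hsplit : A.mulVec h = (colSub A I).mulVec u + (colSub A Iᶜ).mulVec v :=
    mulVec_split A I h
  have hvw : (colSub A I).mulVec u = A.mulVec h - (colSub A Iᶜ).mulVec v := by
    rw [hsplit]; abel
  -- x0 vanishes off I
  have hx0c : ∀ j, j ∉ I → x0 j = 0 := by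
    intro j hj
    by_contra hne
    exact hj ((hI j).mpr hne)
  -- Step A : l1 v ≤ - ∑ s u
  have hx0l1 : l1 x0 = ∑ j : {j // j ∈ I}, signI x0 I j * x0 j := by
    rw [l1, ← Finset.sum_add_sum_compl I (fun j => |x0 j|)]
    have h2 : ∑ j ∈ Iᶜ, |x0 j| = 0 :=
      Finset.sum_eq_zero fun j hj => by rw [abs_eq_zero]; exact hx0c j (Finset.mem_compl.mp hj)
    rw [h2, add_zero, ← Finset.sum_coe_sort I (fun j => |x0 j|)]
    apply Finset.sum_congr rfl
    intro j _
    exact (sign_mul_self_eq_abs ((hI _).mp j.2)).symm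
  have hx1ge : ∑ j : {j // j ∈ I}, signI x0 I j * x1 j + l1 v ≤ l1 x1 := by
    have hdecomp : l1 x1 = ∑ j : {j // j ∈ I}, |x1 j| + ∑ j : {j // j ∈ Iᶜ}, |x1 j| := by
      rw [l1, ← Finset.sum_add_sum_compl I (fun j => |x1 j|),
        Finset.sum_coe_sort I (fun j => |x1 j|), Finset.sum_coe_sort Iᶜ (fun j => |x1 j|)]
    rw [hdecomp]
    apply add_le_add
    · exact Finset.sum_le_sum fun j _ => sign_mul_le_abs _ _
    · apply le_of_eq
      apply Finset.sum_congr rfl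
      intro j _
      have hj : (j : Fin m) ∉ I := Finset.mem_compl.mp j.2
      have : v j = x1 j := by
        simp only [hv, hh, Pi.sub_apply, hx0c _ hj, sub_zero]
      rw [this]
  have hA : l1 v ≤ -∑ j : {j // j ∈ I}, signI x0 I j * u j := by
    have hsum : ∑ j : {j // j ∈ I}, signI x0 I j * u j =
        ∑ j : {j // j ∈ I}, signI x0 I j * x1 j - ∑ j : {j // j ∈ I}, signI x0 I j * x0 j := by
      rw [← Finset.sum_sub_distrib]
      apply Finset.sum_congr rfl
      intro j _
      simp only [hu, hh, Pi.sub_apply]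
      ring
    rw [hsum, ← hx0l1]
    linarith
  -- Step B
  have hB : ∑ j : {j // j ∈ I}, signI x0 I j * u j =
      d ⬝ᵥ A.mulVec h - d ⬝ᵥ (colSub A Iᶜ).mulVec v := by
    have h1 : ∑ j : {j // j ∈ I}, signI x0 I j * u j = ((colSub A I)ᵀ.mulVec d) ⬝ᵥ u := by
      rw [hd, AtD A I x0 hinv]; rfl
    rw [h1, Matrix.mulVec_transpose, ← Matrix.dotProduct_mulVec, hvw, dotProduct_sub]
  -- Step C
  have hC2 : |d ⬝ᵥ (colSub A Iᶜ).mulVec v| ≤ ic * l1 v := by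
    have hswap : d ⬝ᵥ (colSub A Iᶜ).mulVec v =
        ∑ j : {j // j ∈ Iᶜ}, v j * (∑ i, A i j * d i) := by
      simp only [dotProduct, Matrix.mulVec, dotProduct, colSub, Finset.mul_sum]
      rw [Finset.sum_comm]
      apply Finset.sum_congr rfl; intro j _
      apply Finset.sum_congr rfl; intro i _
      ring
    rw [hswap]
    calc |∑ j : {j // j ∈ Iᶜ}, v j * (∑ i, A i j * d i)|
        ≤ ∑ j : {j // j ∈ Iᶜ}, |v j * (∑ i, A i j * d i)| := Finset.abs_sum_le_sum_abs _ _
      _ = ∑ j : {j // j ∈ Iᶜ}, |v j| * |∑ i, A i j * d i| := by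
          apply Finset.sum_congr rfl; intros; rw [abs_mul]
      _ ≤ ∑ j : {j // j ∈ Iᶜ}, |v j| * ic := by
          apply Finset.sum_le_sum; intro j _
          exact mul_le_mul_of_nonneg_left
            (IC_bound A I x0 j (Finset.mem_compl.mp j.2)) (abs_nonneg _)
      _ = ic * l1 v := by rw [← Finset.sum_mul, l1]; ring
  -- Step D
  have hdAh : |d ⬝ᵥ A.mulVec h| ≤ l2 d * (2 * ε) :=
    calc |d ⬝ᵥ A.mulVec h| ≤ l2 d * l2 (A.mulVec h) := abs_dot_le d (A.mulVec h)
      _ ≤ l2 d * (2 * ε) := mul_le_mul_of_nonneg_left hAh (l2_nonneg_s12 d)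
  have hLmain : (1 - ic) * l1 v ≤ 2 * ε * l2 d := by
    have hA' := hA
    rw [hB] at hA'
    have b1 : -(d ⬝ᵥ A.mulVec h) ≤ l2 d * (2 * ε) := le_trans (neg_le_abs _) hdAh
    have b2 : d ⬝ᵥ (colSub A Iᶜ).mulVec v ≤ ic * l1 v := le_trans (le_abs_self _) hC2
    nlinarith
  have hLv : l1 v ≤ 2 * ε * l2 d / (1 - ic) := by
    rw [le_div_iff₀ hC]; nlinarith
  -- Step E
  have hueq : u = ((gram A I)⁻¹ * (colSub A I)ᵀ).mulVec
      (A.mulVec h - (colSub A Iᶜ).mulVec v) := by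
    rw [← hvw, recov A I u hinv]
  have hu2 : l2 u ≤ S * (2 * ε + N * l1 v) := by
    rw [hueq]
    calc l2 (((gram A I)⁻¹ * (colSub A I)ᵀ).mulVec (A.mulVec h - (colSub A Iᶜ).mulVec v))
        ≤ Real.sqrt (opNorm2 (((gram A I)⁻¹ * (colSub A I)ᵀ) *
            ((gram A I)⁻¹ * (colSub A I)ᵀ)ᵀ)) * l2 (A.mulVec h - (colSub A Iᶜ).mulVec v) :=
          l2_mulVec_le_sqrt _ _
      _ = S * l2 (A.mulVec h - (colSub A Iᶜ).mulVec v) := by rw [MMt A I hinv]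
      _ ≤ S * (2 * ε + N * l1 v) := by
          apply mul_le_mul_of_nonneg_left _ hSnn
          have ht := l2_sub_le (A.mulVec h) ((colSub A Iᶜ).mulVec v)
          have hn := le_norm12 (colSub A Iᶜ) v
          rw [← hN] at hn
          linarith
  -- Step F
  have hsplit2 : l2 h ≤ l2 u + l2 v := by
    have e : (∑ j, (h j)^2) = (l2 u)^2 + (l2 v)^2 := by
      rw [l2, l2, Real.sq_sqrt (Finset.sum_nonneg fun _ _ => sq_nonneg _),
        Real.sq_sqrt (Finset.sum_nonneg fun _ _ => sq_nonneg _),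
        ← Finset.sum_add_sum_compl I (fun j => (h j)^2),
        ← Finset.sum_coe_sort I (fun j => (h j)^2),
        ← Finset.sum_coe_sort Iᶜ (fun j => (h j)^2)]
    calc l2 h = Real.sqrt ((l2 u)^2 + (l2 v)^2) := by rw [l2, e]
      _ ≤ Real.sqrt ((l2 u + l2 v)^2) :=
          Real.sqrt_le_sqrt (by nlinarith [l2_nonneg_s12 u, l2_nonneg_s12 v])
      _ = l2 u + l2 v := Real.sqrt_sq (add_nonneg (l2_nonneg_s12 u) (l2_nonneg_s12 v))
  -- Final assembly
  have hx1x0 : l2 (x1 - x0) = l2 h := by rw [hh]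
  rw [hx1x0]
  have hSN1 : (0:ℝ) ≤ S * N + 1 := by nlinarith
  calc l2 h ≤ l2 u + l2 v := hsplit2
    _ ≤ S * (2 * ε + N * l1 v) + l1 v := add_le_add hu2 (l2_le_l1 v)
    _ = 2 * ε * S + (S * N + 1) * l1 v := by ring
    _ ≤ 2 * ε * S + (S * N + 1) * (2 * ε * l2 d / (1 - ic)) := by
        have := mul_le_mul_of_nonneg_left hLv hSN1
        linarith
    _ = 2 * ε * (S + l2 d / (1 - ic) * (S * N + 1)) := by
        field_simp
end
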